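/- Let v : ℝⁿ → ℝ be positively homogeneous of degree 1 and C² on ℝⁿ \ {0}. Define v̄ : ℝ^{n-1} → ℝ by v̄(y) = v(y, 1). Then for every y ∈ ℝ^{n-1}, the (n-1)-st elementary symmetric polynomial of the eigenvalues of D²v at (y,1) equals (1 + |y|²) · det D²v̄(y). -/

import Mathlib

open Matrix Finset

/-- The Hessian matrix of `v` at `x`. -/
noncomputable def hessianMatrix (n : ℕ) (v : EuclideanSpace ℝ (Fin n) → ℝ)
    (x : EuclideanSpace ℝ (Fin n)) : Matrix (Fin n) (Fin n) ℝ :=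
  Matrix.of fun i j =>
    iteratedFDeriv ℝ 2 v x ![EuclideanSpace.single i 1, EuclideanSpace.single j 1]

section aux

lemma adjugate_last_last' {m : ℕ} (A : Matrix (Fin (m+1)) (Fin (m+1)) ℝ) :
    A.adjugate (Fin.last m) (Fin.last m)
      = (A.submatrix Fin.castSucc Fin.castSucc).det := by
  rw [Matrix.adjugate_apply, Matrix.det_succ_row _ (Fin.last m)]
  rw [Finset.sum_eq_single (Fin.last m)]
  · simp [Matrix.updateRow_apply, Fin.succAbove_last]
    congr 1
    ext i j
    simp [Matrix.updateRow_apply, (Fin.castSucc_lt_last i).ne]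
  · intro j _ hj
    simp [Matrix.updateRow_apply, Pi.single_apply, hj.symm]
  · simp

lemma trace_adjugate_ker' {m : ℕ} (A : Matrix (Fin (m+1)) (Fin (m+1)) ℝ)
    (hsym : Aᵀ = A) (X : Fin (m+1) → ℝ) (hker : A.mulVec X = 0)
    (hXl : X (Fin.last m) = 1) :
    A.adjugate.trace = (∑ i, X i ^ 2) * A.adjugate (Fin.last m) (Fin.last m) := by
  have hX0 : X ≠ 0 := by
    intro h; rw [h] at hXl; simp at hXl
  have hdet : A.det = 0 := Matrix.exists_mulVec_eq_zero_iff.mp ⟨X, hX0, hker⟩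
  have hadjsym : ∀ i j, A.adjugate i j = A.adjugate j i := by
    intro i j
    conv_lhs => rw [← hsym]
    rw [← Matrix.adjugate_transpose, Matrix.transpose_apply]
  by_cases hk : ∀ u : Fin (m+1) → ℝ, A.mulVec u = 0 → ∃ c : ℝ, u = c • X
  · have hcol : ∀ j, A.mulVec (fun i => A.adjugate i j) = 0 := by
      intro j
      funext k
      have h1 : (A * A.adjugate) k j = 0 := by
        rw [Matrix.mul_adjugate, hdet, zero_smul]; rfl
      simpa [Matrix.mulVec, dotProduct, Matrix.mul_apply] using h1
    choose c hc using fun j => hk _ (hcol j)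
    have hcc : ∀ i j, A.adjugate i j = c j * X i := by
      intro i j
      have := congrFun (hc j) i
      simpa using this
    have hclast : ∀ j, c j = c (Fin.last m) * X j := by
      intro j
      have h1 := hadjsym (Fin.last m) j
      rw [hcc, hcc, hXl, mul_one] at h1
      exact h1
    have hll : A.adjugate (Fin.last m) (Fin.last m) = c (Fin.last m) := by
      rw [hcc, hXl, mul_one]
    rw [hll, Matrix.trace]
    rw [Finset.sum_mul]
    apply Finset.sum_congr rfl
    intro i _
    rw [Matrix.diag_apply, hcc, hclast]
    ring
  · push_neg at hk
    obtain ⟨u, hu, hux⟩ := hk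
    have hadj0 : ∀ i j, A.adjugate i j = 0 := by
      intro i j
      rw [Matrix.adjugate_apply]
      apply Matrix.exists_mulVec_eq_zero_iff.mp
      by_cases hui : u i = 0
      · refine ⟨u, ?_, ?_⟩
        · intro h; exact hux 0 (by rw [h, zero_smul])
        · funext k
          by_cases hkj : k = j
          · subst hkj
            simp [Matrix.mulVec, Matrix.updateRow_apply, single_dotProduct, hui]
          · have := congrFun hu k
            simpa [Matrix.mulVec, Matrix.updateRow_apply, hkj] using this
      · refine ⟨X i • u - u i • X, ?_, ?_⟩
        · intro h
          have h' : X i • u = u i • X := by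
            have := sub_eq_zero.mp h; linear_combination (norm := module) this
          by_cases hXi : X i = 0
          · rw [hXi, zero_smul] at h'
            have : X = 0 := by
              have := h'.symm
              rcases smul_eq_zero.mp this with h | h
              · exact absurd h hui
              · exact h
            exact hX0 this
          · apply hux (u i / X i)
            funext k
            have := congrFun h' k
            simp only [Pi.smul_apply, smul_eq_mul] at this
            rw [Pi.smul_apply, smul_eq_mul, div_mul_eq_mul_div, eq_div_iff hXi]
            linarith [this]
        · funext k
          have hAu : ∀ k', A.mulVec u k' = 0 := fun k' => congrFun hu k'
          have hAX : ∀ k', A.mulVec X k' = 0 := fun k' => congrFun hker k'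
          by_cases hkj : k = j
          · subst hkj
            simp [Matrix.mulVec, Matrix.updateRow_apply, single_dotProduct,
              dotProduct_sub, dotProduct_smul]
            ring
          · have h1 := hAu k
            have h2 := hAX k
            simp only [Matrix.mulVec, dotProduct] at h1 h2 ⊢
            simp only [Matrix.updateRow_apply, hkj, if_false, Pi.sub_apply, Pi.smul_apply,
              smul_eq_mul, mul_sub]
            rw [Finset.sum_sub_distrib]
            simp only [← mul_assoc]
            simp only [mul_comm _ (X i), mul_comm _ (u i), mul_assoc]
            rw [← Finset.mul_sum, ← Finset.mul_sum, h1, h2]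
            simp
    simp [Matrix.trace, Matrix.diag_apply, hadj0]

/-- the affine slice map `z ↦ snoc z 1` -/
def iotaFun (m : ℕ) (z : EuclideanSpace ℝ (Fin m)) : EuclideanSpace ℝ (Fin (m+1)) :=
  WithLp.toLp 2 (Fin.snoc (WithLp.ofLp z) 1)

/-- the inclusion `z ↦ snoc z 0` as a plain linear map on pi types -/
def inclLM (m : ℕ) : (Fin m → ℝ) →ₗ[ℝ] (Fin (m+1) → ℝ) where
  toFun := fun z => Fin.snoc z 0
  map_add' := by
    intro a b
    funext k
    induction k using Fin.lastCases with
    | last => simp [Fin.snoc_last]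
    | cast i => simp [Fin.snoc_castSucc]
  map_smul' := by
    intro t a
    funext k
    induction k using Fin.lastCases with
    | last => simp [Fin.snoc_last]
    | cast i => simp [Fin.snoc_castSucc]

/-- the inclusion `z ↦ snoc z 0` as a continuous linear map -/
noncomputable def inclCLM (m : ℕ) :
    EuclideanSpace ℝ (Fin m) →L[ℝ] EuclideanSpace ℝ (Fin (m+1)) :=
  LinearMap.toContinuousLinearMap
    (((WithLp.linearEquiv 2 ℝ (Fin (m+1) → ℝ)).symm.toLinearMap.comp (inclLM m)).comp
      (WithLp.linearEquiv 2 ℝ (Fin m → ℝ)).toLinearMap)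

lemma inclCLM_apply {m : ℕ} (z : EuclideanSpace ℝ (Fin m)) (k : Fin (m+1)) :
    inclCLM m z k = @Fin.snoc m (fun _ => ℝ) (fun a => z a) 0 k := rfl

lemma iotaFun_apply {m : ℕ} (z : EuclideanSpace ℝ (Fin m)) (k : Fin (m+1)) :
    iotaFun m z k = @Fin.snoc m (fun _ => ℝ) (fun a => z a) 1 k := rfl

lemma inclCLM_single {m : ℕ} (i : Fin m) :
    inclCLM m (EuclideanSpace.single i 1) = EuclideanSpace.single i.castSucc 1 := by
  ext k
  rw [inclCLM_apply]
  induction k using Fin.lastCases with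
  | last =>
    simp [Fin.snoc_last, EuclideanSpace.single_apply, (Fin.castSucc_lt_last i).ne']
  | cast a =>
    simp only [Fin.snoc_castSucc]
    simp [EuclideanSpace.single_apply, Fin.castSucc_inj]

lemma snoc_one_eq {m : ℕ} (z : EuclideanSpace ℝ (Fin m)) :
    iotaFun m z = inclCLM m z + iotaFun m 0 := by
  ext k
  have h : (inclCLM m z + iotaFun m 0) k = inclCLM m z k + iotaFun m 0 k := rfl
  rw [h, inclCLM_apply, iotaFun_apply, iotaFun_apply]
  induction k using Fin.lastCases with
  | last => simp [Fin.snoc_last]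
  | cast a =>
    simp only [Fin.snoc_castSucc]
    have h0 : (0 : EuclideanSpace ℝ (Fin m)) a = 0 := rfl
    rw [h0, add_zero]

lemma snoc_one_ne_zero {m : ℕ} (z : EuclideanSpace ℝ (Fin m)) :
    iotaFun m z ≠ 0 := by
  show (WithLp.toLp 2 (Fin.snoc (WithLp.ofLp z) 1) : EuclideanSpace ℝ (Fin (m+1))) ≠ 0
  intro h
  have := congrArg (fun w : EuclideanSpace ℝ (Fin (m+1)) => w (Fin.last m)) h
  simp [Fin.snoc_last] at this

end aux

theorem sigma_nsub1_eq_det_slice (m : ℕ) (v : EuclideanSpace ℝ (Fin (m + 1)) → ℝ)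
    (hhom : ∀ t : ℝ, 0 < t → ∀ x, v (t • x) = t * v x)
    (hreg : ContDiffOn ℝ 2 v {(0 : EuclideanSpace ℝ (Fin (m + 1)))}ᶜ)
    (vbar : EuclideanSpace ℝ (Fin m) → ℝ)
    (hvbar : ∀ y : EuclideanSpace ℝ (Fin m), vbar y = v (WithLp.toLp 2 (Fin.snoc (WithLp.ofLp y) 1)))
    (y : EuclideanSpace ℝ (Fin m)) :
    (hessianMatrix (m + 1) v (WithLp.toLp 2 (Fin.snoc (WithLp.ofLp y) 1))).adjugate.trace
      = (1 + ‖y‖ ^ 2) * (hessianMatrix m vbar y).det := by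
  classical
  set x₀ : EuclideanSpace ℝ (Fin (m+1)) := WithLp.toLp 2 (Fin.snoc (WithLp.ofLp y) 1) with hx0def
  have hx0ne : x₀ ≠ 0 := snoc_one_ne_zero y
  have hopen : IsOpen ({(0 : EuclideanSpace ℝ (Fin (m+1)))}ᶜ) := isOpen_compl_singleton
  have hnhds : ∀ z : EuclideanSpace ℝ (Fin (m+1)), z ≠ 0 → ContDiffAt ℝ 2 v z := fun z hz =>
    hreg.contDiffAt (hopen.mem_nhds hz)
  have hC2 : ContDiffAt ℝ 2 v x₀ := hnhds _ hx0ne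
  have hev : ∀ᶠ w in nhds x₀, HasFDerivAt v (fderiv ℝ v w) w := by
    filter_upwards [hopen.mem_nhds hx0ne] with w hw
    exact ((hnhds w hw).differentiableAt (by norm_num)).hasFDerivAt
  set f'' := fderiv ℝ (fderiv ℝ v) x₀ with hf''def
  have hf'' : HasFDerivAt (fderiv ℝ v) f'' x₀ :=
    ((hC2.fderiv_right (m := 1) (le_refl 2)).differentiableAt (by norm_num)).hasFDerivAt
  have hsymm : ∀ a b, f'' a b = f'' b a := fun a b =>
    second_derivative_symmetric_of_eventually hev hf'' a b
  -- gradient is 0-homogeneous along the ray through x₀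
  have hgrad : ∀ t : ℝ, 0 < t → fderiv ℝ v (t • x₀) = fderiv ℝ v x₀ := by
    intro t ht
    have htx : t • x₀ ≠ 0 := smul_ne_zero (ne_of_gt ht) hx0ne
    have h1 : HasFDerivAt v (fderiv ℝ v (t • x₀)) (t • x₀) :=
      ((hnhds _ htx).differentiableAt (by norm_num)).hasFDerivAt
    have hsmul : HasFDerivAt (fun x : EuclideanSpace ℝ (Fin (m+1)) => t • x)
        (t • ContinuousLinearMap.id ℝ (EuclideanSpace ℝ (Fin (m+1)))) x₀ := by
      have := (t • ContinuousLinearMap.id ℝ (EuclideanSpace ℝ (Fin (m+1)))).hasFDerivAt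
        (x := x₀)
      exact this
    have h2 : HasFDerivAt (fun x => v (t • x))
        ((fderiv ℝ v (t • x₀)).comp
          (t • ContinuousLinearMap.id ℝ (EuclideanSpace ℝ (Fin (m+1))))) x₀ :=
      h1.comp x₀ hsmul
    have h3 : HasFDerivAt (fun x => t * v x) (t • fderiv ℝ v x₀) x₀ :=
      (hC2.differentiableAt (by norm_num)).hasFDerivAt.const_mul t
    have h4 : (fun x => v (t • x)) = fun x => t * v x := funext fun x => hhom t ht x
    rw [h4] at h2
    have h5 := h2.unique h3
    have h6 : t • fderiv ℝ v (t • x₀) = t • fderiv ℝ v x₀ := by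
      ext w
      have := ContinuousLinearMap.ext_iff.mp h5 w
      simpa [ContinuousLinearMap.comp_apply, ContinuousLinearMap.smul_apply,
        _root_.map_smul] using this
    exact smul_right_injective _ (ne_of_gt ht) h6
  -- Euler: f'' x₀ = 0
  have hx0ker : f'' x₀ = 0 := by
    have hd : HasDerivAt (fun t : ℝ => t • x₀) x₀ 1 := by
      simpa using (hasDerivAt_id (1:ℝ)).smul_const x₀
    have hf''1 : HasFDerivAt (fderiv ℝ v) f'' ((1:ℝ) • x₀) := by
      rw [one_smul]; exact hf''
    have hc : HasDerivAt (fun t : ℝ => fderiv ℝ v (t • x₀)) (f'' x₀) 1 :=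
      hf''1.comp_hasDerivAt 1 hd
    have hconst : (fun t : ℝ => fderiv ℝ v (t • x₀))
        =ᶠ[nhds (1:ℝ)] fun _ => fderiv ℝ v x₀ := by
      filter_upwards [eventually_gt_nhds (by norm_num : (0:ℝ) < 1)] with t ht
      exact hgrad t ht
    have hc0 : HasDerivAt (fun t : ℝ => fderiv ℝ v (t • x₀)) 0 1 :=
      (hasDerivAt_const (1:ℝ) (fderiv ℝ v x₀)).congr_of_eventuallyEq hconst
    exact hc.unique hc0
  -- entries of the Hessian
  have hAent : ∀ i j, hessianMatrix (m+1) v x₀ i j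
      = f'' (EuclideanSpace.single i 1) (EuclideanSpace.single j 1) := by
    intro i j
    show iteratedFDeriv ℝ 2 v x₀ ![EuclideanSpace.single i 1, EuclideanSpace.single j 1] = _
    rw [iteratedFDeriv_two_apply]
    simp
    rfl
  -- kernel vector
  set X : Fin (m+1) → ℝ := fun i => x₀ i with hXdef
  have hXrep : ∑ j, X j • EuclideanSpace.single j (1:ℝ) = x₀ := by
    have := (EuclideanSpace.basisFun (Fin (m+1)) ℝ).sum_repr x₀
    simpa [EuclideanSpace.basisFun_apply, EuclideanSpace.basisFun_repr] using this
  have hker : (hessianMatrix (m+1) v x₀).mulVec X = 0 := by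
    funext i
    have h1 : f'' (EuclideanSpace.single i 1) x₀ = 0 := by
      rw [hsymm, hx0ker]; rfl
    have h2 : f'' (EuclideanSpace.single i 1) x₀
        = ∑ j, X j * f'' (EuclideanSpace.single i 1) (EuclideanSpace.single j 1) := by
      rw [← hXrep, map_sum]
      simp [smul_eq_mul]
    have : ∑ j, hessianMatrix (m+1) v x₀ i j * X j = 0 := by
      calc ∑ j, hessianMatrix (m+1) v x₀ i j * X j
          = ∑ j, X j * f'' (EuclideanSpace.single i 1) (EuclideanSpace.single j 1) := by
            apply Finset.sum_congr rfl
            intro j _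
            rw [hAent]; ring
        _ = f'' (EuclideanSpace.single i 1) x₀ := h2.symm
        _ = 0 := h1
    simpa [Matrix.mulVec, dotProduct] using this
  have hsymA : (hessianMatrix (m+1) v x₀)ᵀ = hessianMatrix (m+1) v x₀ := by
    ext i j
    rw [Matrix.transpose_apply, hAent, hAent]
    exact hsymm _ _
  have hXl : X (Fin.last m) = 1 := by
    simp [hXdef, hx0def, Fin.snoc_last]
  have hLA := trace_adjugate_ker' (hessianMatrix (m+1) v x₀) hsymA X hker hXl
  rw [hLA, adjugate_last_last']
  -- sum of squares
  have hsum : ∑ i, X i ^ 2 = 1 + ‖y‖ ^ 2 := by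
    have hnorm : ‖y‖ ^ 2 = ∑ i, y i ^ 2 := by
      rw [EuclideanSpace.norm_eq, Real.sq_sqrt (Finset.sum_nonneg fun i _ => sq_nonneg _)]
      simp [Real.norm_eq_abs, sq_abs]
    rw [Fin.sum_univ_castSucc, hnorm]
    have h1 : ∀ i : Fin m, X i.castSucc = y i := by
      intro i; simp [hXdef, hx0def, Fin.snoc_castSucc]
    rw [hXl]
    simp only [h1]
    ring
  -- identify the block
  have hι : ∀ z : EuclideanSpace ℝ (Fin m),
      HasFDerivAt (iotaFun m) (inclCLM m) z := by
    intro z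
    have heq : iotaFun m = fun z' => inclCLM m z' + iotaFun m 0 :=
      funext snoc_one_eq
    rw [heq]
    exact (inclCLM m).hasFDerivAt.add_const _
  set P := (ContinuousLinearMap.compL ℝ (EuclideanSpace ℝ (Fin m))
    (EuclideanSpace ℝ (Fin (m+1))) ℝ).flip (inclCLM m) with hPdef
  have hfdvbar : ∀ z, HasFDerivAt vbar (P (fderiv ℝ v (iotaFun m z))) z := by
    intro z
    have hz : iotaFun m z ≠ 0 := snoc_one_ne_zero z
    have hv : HasFDerivAt v (fderiv ℝ v (iotaFun m z)) (iotaFun m z) :=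
      ((hnhds _ hz).differentiableAt (by norm_num)).hasFDerivAt
    have h := hv.comp z (hι z)
    have hco : (fun z' : EuclideanSpace ℝ (Fin m) => v (iotaFun m z')) = vbar :=
      funext fun z' => (hvbar z').symm
    rw [show P (fderiv ℝ v (iotaFun m z))
        = (fderiv ℝ v (iotaFun m z)).comp (inclCLM m) from rfl]
    exact hco ▸ h
  have hfun : fderiv ℝ vbar = fun z => P (fderiv ℝ v (iotaFun m z)) := by
    funext z
    exact (hfdvbar z).fderiv
  have hgd : HasFDerivAt (fun z : EuclideanSpace ℝ (Fin m) =>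
      fderiv ℝ v (iotaFun m z)) (f''.comp (inclCLM m)) y := by
    have hx : HasFDerivAt (fderiv ℝ v) f'' (iotaFun m y) := hf''
    exact hx.comp y (hι y)
  have hsecond : fderiv ℝ (fderiv ℝ vbar) y = P.comp (f''.comp (inclCLM m)) := by
    rw [hfun]
    exact (P.hasFDerivAt.comp y hgd).fderiv
  have hB : hessianMatrix m vbar y
      = (hessianMatrix (m+1) v x₀).submatrix Fin.castSucc Fin.castSucc := by
    ext i j
    show iteratedFDeriv ℝ 2 vbar y
        ![EuclideanSpace.single i 1, EuclideanSpace.single j 1] = _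
    rw [iteratedFDeriv_two_apply]
    simp only [Matrix.cons_val_zero, Matrix.cons_val_one, Matrix.head_cons]
    rw [hsecond]
    rw [Matrix.submatrix_apply, hAent]
    simp only [ContinuousLinearMap.comp_apply, hPdef, ContinuousLinearMap.flip_apply,
      ContinuousLinearMap.compL_apply, inclCLM_single]
  rw [hsum, hB]
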